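/- For every natural number k ≥ 1, the sum of the first 4k Lucas numbers satisfies S^L_{4k} = L_{4k+2} − 3 = 5·F_{k+1}·F_{2k}·L_{k+1}; in particular L_{k+1} divides L_{4k+2} − 3, and k+1 is the largest such index: for every m > k+1, L_m does not divide L_{4k+2} − 3. -/

import Mathlib

def lucas : ℕ → ℕ
  | 0 => 2
  | 1 => 1
  | n + 2 => lucas n + lucas (n + 1)

open Nat Finset

lemma lucas_succ_eq (n : ℕ) : lucas (n + 1) = fib n + fib (n + 2) := by
  induction n using Nat.twoStepInduction with
  | zero => rfl
  | one => rfl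
  | more n ih1 ih2 =>
      show lucas (n + 1) + lucas (n + 2) = _
      have e1 : fib (n + 1 + 2) = fib (n + 3) := rfl
      have e2 : fib (n + 2 + 2) = fib (n + 4) := rfl
      have e3 : lucas (n + 1 + 1) = lucas (n + 2) := rfl
      have h1 : fib (n + 2) = fib n + fib (n + 1) := fib_add_two
      have h2 : fib (n + 3) = fib (n + 1) + fib (n + 2) := fib_add_two
      have h3 : fib (n + 4) = fib (n + 2) + fib (n + 3) := fib_add_two
      omega

lemma lucas_pos (n : ℕ) : 0 < lucas n := by
  cases n with
  | zero => norm_num [lucas]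
  | succ m =>
      rw [lucas_succ_eq]
      have : 0 < fib (m + 2) := fib_pos.mpr (by omega)
      omega

lemma lucas_mono {a b : ℕ} (ha : 1 ≤ a) (hab : a ≤ b) : lucas a ≤ lucas b := by
  obtain ⟨a, rfl⟩ : ∃ a', a = a' + 1 := ⟨a - 1, by omega⟩
  obtain ⟨b, rfl⟩ : ∃ b', b = b' + 1 := ⟨b - 1, by omega⟩
  rw [lucas_succ_eq, lucas_succ_eq]
  have h1 : fib a ≤ fib b := fib_mono (by omega)
  have h2 : fib (a + 2) ≤ fib (b + 2) := fib_mono (by omega)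
  omega

lemma fib_mul_lucas (u : ℕ) : fib u * lucas u = fib (2 * u) := by
  cases u with
  | zero => rfl
  | succ v =>
      rw [fib_two_mul, lucas_succ_eq]
      congr 1
      have e : fib (v + 1 + 1) = fib (v + 2) := rfl
      have h1 : fib (v + 2) = fib v + fib (v + 1) := fib_add_two
      omega

lemma lucas_dvd_fib (m : ℕ) : lucas m ∣ fib (2 * m) :=
  Dvd.intro_left _ (fib_mul_lucas m)

lemma cassini (n : ℕ) :
    ((fib (n + 1) : ℤ)) ^ 2 - fib (n + 1) * fib n - (fib n : ℤ) ^ 2 = (-1) ^ n := by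
  induction n with
  | zero => simp
  | succ n ih =>
      have h : (fib (n + 2) : ℤ) = fib n + fib (n + 1) := by
        exact_mod_cast (fib_add_two : fib (n + 2) = fib n + fib (n + 1))
      rw [h, pow_succ]
      linear_combination (-1 : ℤ) * ih

lemma lucas_sq (n : ℕ) :
    ((lucas (n + 1) : ℤ)) ^ 2 - 5 * (fib (n + 1) : ℤ) ^ 2 = 4 * (-1) ^ (n + 1) := by
  have h : (lucas (n + 1) : ℤ) = 2 * fib n + fib (n + 1) := by
    have h1 : lucas (n + 1) = fib n + fib (n + 2) := lucas_succ_eq n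
    have h2 : fib (n + 2) = fib n + fib (n + 1) := fib_add_two
    push_cast [h1, h2]; ring
  rw [h, pow_succ]
  linear_combination (-4 : ℤ) * cassini n

lemma gcd_lucas_fib_self (m : ℕ) : Nat.gcd (lucas m) (fib m) ∣ 2 := by
  cases m with
  | zero => decide
  | succ n =>
      set d := Nat.gcd (lucas (n + 1)) (fib (n + 1)) with hd
      have hdl : d ∣ lucas (n + 1) := Nat.gcd_dvd_left _ _
      have hdf : d ∣ fib (n + 1) := Nat.gcd_dvd_right _ _
      have h1 : (d : ℤ) ^ 2 ∣ (lucas (n + 1) : ℤ) ^ 2 :=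
        pow_dvd_pow_of_dvd (Int.natCast_dvd_natCast.mpr hdl) 2
      have h2 : (d : ℤ) ^ 2 ∣ 5 * (fib (n + 1) : ℤ) ^ 2 :=
        Dvd.dvd.mul_left (pow_dvd_pow_of_dvd (Int.natCast_dvd_natCast.mpr hdf) 2) 5
      have h3 : (d : ℤ) ^ 2 ∣ 4 * (-1) ^ (n + 1) := by
        rw [← lucas_sq]; exact dvd_sub h1 h2
      have h4 : (d : ℤ) ^ 2 ∣ 4 := by
        rcases Nat.even_or_odd (n + 1) with h | h
        · rw [h.neg_one_pow] at h3; simpa using h3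
        · rw [h.neg_one_pow] at h3
          have := h3.neg_right
          simpa using this
      have h5 : d ^ 2 ∣ 4 := by exact_mod_cast h4
      have h6 : d ≤ 2 := by
        by_contra hc
        have h9 : 9 ≤ d ^ 2 := by nlinarith [Nat.lt_of_not_le hc]
        have := Nat.le_of_dvd (by norm_num) h5
        omega
      interval_cases d
      · exfalso; norm_num at h5
      · norm_num
      · norm_num

lemma dvd_gcd_mul_gcd {n a b : ℕ} (h : n ∣ a * b) :
    n ∣ Nat.gcd n a * Nat.gcd n b :=
  Nat.dvd_gcd_mul_gcd_iff_dvd_mul.mpr h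

lemma lucas_period5 (n : ℕ) : lucas (n + 4) % 5 = lucas n % 5 := by
  induction n using Nat.twoStepInduction with
  | zero => rfl
  | one => rfl
  | more n ih1 ih2 =>
      have e1 : lucas (n + 6) = lucas (n + 4) + lucas (n + 5) := rfl
      have e2 : lucas (n + 2) = lucas n + lucas (n + 1) := rfl
      have e3 : lucas (n + 1 + 4) = lucas (n + 5) := rfl
      have e4 : lucas (n + 2 + 4) = lucas (n + 6) := rfl
      have e5 : lucas (n + 1 + 1) = lucas (n + 2) := rfl
      omega

lemma five_not_dvd_lucas (n : ℕ) : ¬ (5 ∣ lucas n) := by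
  induction n using Nat.strong_induction_on with
  | _ n ih =>
      match n with
      | 0 => decide
      | 1 => decide
      | 2 => decide
      | 3 => decide
      | (m + 4) =>
          intro h
          have := lucas_period5 m
          exact ih m (by omega) (by omega)

lemma key_gcd_odd {m u : ℕ} (hm : 1 ≤ m) :
    Nat.gcd (lucas m) (fib (2 * u)) ∣ 2 * lucas (Nat.gcd m u) := by
  set t := Nat.gcd m u with ht
  set d := Nat.gcd (lucas m) (fib (2 * u)) with hdd
  have hdl : d ∣ lucas m := Nat.gcd_dvd_left _ _
  have hdf2m : d ∣ fib (2 * m) := hdl.trans (lucas_dvd_fib m)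
  have hdfu : d ∣ fib (2 * u) := Nat.gcd_dvd_right _ _
  have hgcd : Nat.gcd (fib (2 * m)) (fib (2 * u)) = fib (2 * t) := by
    rw [← Nat.fib_gcd, ht, Nat.gcd_mul_left]
  have hdft : d ∣ fib (2 * t) := by
    rw [← hgcd]; exact Nat.dvd_gcd hdf2m hdfu
  have hftl : fib (2 * t) = fib t * lucas t := (fib_mul_lucas t).symm
  have h1 : d ∣ fib t * lucas t := hftl ▸ hdft
  have h2 : d ∣ Nat.gcd d (fib t) * Nat.gcd d (lucas t) := dvd_gcd_mul_gcd h1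
  have h3 : Nat.gcd d (fib t) ∣ 2 := by
    have hft : fib t ∣ fib m := fib_dvd _ _ (Nat.gcd_dvd_left m u)
    have : Nat.gcd d (fib t) ∣ Nat.gcd (lucas m) (fib m) :=
      Nat.dvd_gcd ((Nat.gcd_dvd_left _ _).trans hdl)
        ((Nat.gcd_dvd_right _ _).trans hft)
    exact this.trans (gcd_lucas_fib_self m)
  calc d ∣ Nat.gcd d (fib t) * Nat.gcd d (lucas t) := h2
    _ ∣ 2 * lucas t := Nat.mul_dvd_mul h3 (Nat.gcd_dvd_right _ _)

lemma key_gcd_even {m u : ℕ} (h : 2 * Nat.gcd m u ∣ m) :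
    Nat.gcd (lucas m) (fib (2 * u)) ∣ 2 := by
  set t := Nat.gcd m u with ht
  set d := Nat.gcd (lucas m) (fib (2 * u)) with hdd
  have hdl : d ∣ lucas m := Nat.gcd_dvd_left _ _
  have hdf2m : d ∣ fib (2 * m) := hdl.trans (lucas_dvd_fib m)
  have hdfu : d ∣ fib (2 * u) := Nat.gcd_dvd_right _ _
  have hgcd : Nat.gcd (fib (2 * m)) (fib (2 * u)) = fib (2 * t) := by
    rw [← Nat.fib_gcd, ht, Nat.gcd_mul_left]
  have hdft : d ∣ fib (2 * t) := by
    rw [← hgcd]; exact Nat.dvd_gcd hdf2m hdfu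
  have hfm : fib (2 * t) ∣ fib m := fib_dvd _ _ h
  have : d ∣ Nat.gcd (lucas m) (fib m) := Nat.dvd_gcd hdl (hdft.trans hfm)
  exact this.trans (gcd_lucas_fib_self m)

lemma four_lucas_lt {n : ℕ} (hn : 1 ≤ n) : 4 * lucas n < lucas (n + 4) := by
  have e1 : lucas (n + 4) = lucas (n + 2) + lucas (n + 3) := rfl
  have e2 : lucas (n + 3) = lucas (n + 1) + lucas (n + 2) := rfl
  have e3 : lucas (n + 2) = lucas n + lucas (n + 1) := rfl
  have h1 : lucas n ≤ lucas (n + 1) := lucas_mono hn (by omega)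
  have h2 : 0 < lucas n := lucas_pos n
  omega

lemma sixteen_fib_lt {n : ℕ} (hn : 1 ≤ n) : 16 * fib n < fib (n + 7) := by
  have h : fib (n + 7) = fib n * fib 6 + fib (n + 1) * fib 7 := by
    have := fib_add n 6
    simpa using this
  have h6 : fib 6 = 8 := by decide
  have h7 : fib 7 = 13 := by decide
  have hmono : fib n ≤ fib (n + 1) := fib_le_fib_succ
  have hpos : 0 < fib n := fib_pos.mpr hn
  rw [h, h6, h7]
  nlinarith

lemma lucas_le_two_fib (n : ℕ) : lucas n ≤ 2 * fib (n + 1) := by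
  cases n with
  | zero => decide
  | succ v =>
      rw [lucas_succ_eq]
      have e : fib (v + 1 + 1) = fib (v + 2) := rfl
      have : fib v ≤ fib (v + 2) := fib_mono (by omega)
      omega

lemma fib_succ_le_lucas {n : ℕ} (hn : 1 ≤ n) : fib (n + 1) ≤ lucas n := by
  obtain ⟨v, rfl⟩ : ∃ v, n = v + 1 := ⟨n - 1, by omega⟩
  rw [lucas_succ_eq]
  have e : fib (v + 1 + 1) = fib (v + 2) := rfl
  omega

lemma fib_mul_fib_le (a b : ℕ) : fib (a + 1) * fib (b + 1) ≤ fib (a + b + 1) := by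
  have := fib_add a b
  omega

lemma sum_lucas (n : ℕ) : (∑ i ∈ Icc 1 n, lucas i) + 3 = lucas (n + 2) := by
  induction n with
  | zero => decide
  | succ n ih =>
      rw [Finset.sum_Icc_succ_top (by omega)]
      have e : lucas (n + 1 + 2) = lucas (n + 1) + lucas (n + 2) := rfl
      omega

lemma lucas_4k2 (k : ℕ) : lucas (4 * k + 2) = 5 * fib (2 * k) * fib (2 * k + 2) + 3 := by
  have h1 : lucas (4 * k + 2) = fib (4 * k + 1) + fib (4 * k + 3) := lucas_succ_eq (4 * k + 1)
  have h2 : fib (4 * k + 1) = fib (2 * k) * fib (2 * k) + fib (2 * k + 1) * fib (2 * k + 1) := by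
    have := fib_add (2 * k) (2 * k); convert this using 2 <;> omega
  have h3 : fib (4 * k + 3) =
      fib (2 * k + 1) * fib (2 * k + 1) + fib (2 * k + 2) * fib (2 * k + 2) := by
    have := fib_add (2 * k + 1) (2 * k + 1); convert this using 2 <;> omega
  have hc : ((fib (2 * k + 1) : ℤ)) ^ 2 - fib (2 * k + 1) * fib (2 * k) - (fib (2 * k) : ℤ) ^ 2
      = 1 := by
    have := cassini (2 * k)
    simpa [pow_mul] using this
  have hf : (fib (2 * k + 2) : ℤ) = fib (2 * k) + fib (2 * k + 1) := by
    exact_mod_cast congrArg (Nat.cast (R := ℤ)) (fib_add_two (n := 2 * k))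
  have : (lucas (4 * k + 2) : ℤ) = 5 * fib (2 * k) * fib (2 * k + 2) + 3 := by
    rw [h1]
    push_cast [h2, h3]
    rw [hf]
    linear_combination 3 * hc
  exact_mod_cast this

lemma contra_four {m : ℕ} (h4 : lucas m ∣ 4) (hm : 4 ≤ m) : False := by
  have h1 := Nat.le_of_dvd (by norm_num) h4
  have h2 : lucas 4 ≤ lucas m := lucas_mono (by norm_num) hm
  have h3 : lucas 4 = 7 := rfl
  omega

lemma contra_fourlucas {m t : ℕ} (ht : 2 ≤ t) (h3t : 3 * t ≤ m)
    (h : lucas m ∣ 4 * lucas t) : False := by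
  have h1 : lucas m ≤ 4 * lucas t :=
    Nat.le_of_dvd (Nat.mul_pos (by norm_num) (lucas_pos t)) h
  have h2 : 4 * lucas t < lucas (t + 4) := four_lucas_lt (by omega)
  have h3 : lucas (t + 4) ≤ lucas m := lucas_mono (by omega) (by omega)
  omega

lemma contra_D {m t₁ t₂ : ℕ} (h₁ : 3 ≤ t₁) (h₂ : 3 ≤ t₂) (hm : t₁ + t₂ + 7 ≤ m)
    (h : lucas m ∣ 4 * (lucas t₁ * lucas t₂)) : False := by
  have hpos : 0 < 4 * (lucas t₁ * lucas t₂) :=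
    Nat.mul_pos (by norm_num) (Nat.mul_pos (lucas_pos t₁) (lucas_pos t₂))
  have hle : lucas m ≤ 4 * (lucas t₁ * lucas t₂) := Nat.le_of_dvd hpos h
  have a1 : lucas t₁ ≤ 2 * fib (t₁ + 1) := lucas_le_two_fib t₁
  have a2 : lucas t₂ ≤ 2 * fib (t₂ + 1) := lucas_le_two_fib t₂
  have a3 : fib (t₁ + 1) * fib (t₂ + 1) ≤ fib (t₁ + t₂ + 1) := fib_mul_fib_le t₁ t₂
  have a4 : 16 * fib (t₁ + t₂ + 1) < fib (t₁ + t₂ + 1 + 7) := sixteen_fib_lt (by omega)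
  have a5 : fib (t₁ + t₂ + 1 + 7) ≤ fib (m + 1) := fib_mono (by omega)
  have a6 : fib (m + 1) ≤ lucas m := fib_succ_le_lucas (by omega)
  have amul : lucas t₁ * lucas t₂ ≤ 2 * fib (t₁ + 1) * (2 * fib (t₂ + 1)) :=
    Nat.mul_le_mul a1 a2
  nlinarith

lemma three_mul_le {t m : ℕ} (htm : t ∣ m) (h2 : ¬ 2 * t ∣ m) (hlt : t < m) :
    3 * t ≤ m := by
  obtain ⟨q, rfl⟩ := htm
  have hq3 : 3 ≤ q := by
    by_contra hq
    interval_cases q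
    · simp at hlt
    · simp at hlt
    · exact h2 ⟨1, by ring⟩
  calc 3 * t = t * 3 := by ring
    _ ≤ t * q := Nat.mul_le_mul_left t hq3

lemma main4 (k : ℕ) (hk : 2 ≤ k) (m : ℕ) (hm : k + 1 < m)
    (hdvd : lucas m ∣ fib (2 * k) * fib (2 * k + 2)) : False := by
  have hkpos : 0 < k := by omega
  have ht₁dm : Nat.gcd m k ∣ m := Nat.gcd_dvd_left m k
  have ht₁dk : Nat.gcd m k ∣ k := Nat.gcd_dvd_right m k
  have ht₂dm : Nat.gcd m (k + 1) ∣ m := Nat.gcd_dvd_left m (k + 1)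
  have ht₂dk : Nat.gcd m (k + 1) ∣ k + 1 := Nat.gcd_dvd_right m (k + 1)
  set t₁ := Nat.gcd m k with ht₁
  set t₂ := Nat.gcd m (k + 1) with ht₂
  have ht₁pos : 0 < t₁ := Nat.gcd_pos_of_pos_right m hkpos
  have ht₂pos : 0 < t₂ := Nat.gcd_pos_of_pos_right m (by omega)
  have ht₁le : t₁ ≤ k := Nat.le_of_dvd hkpos ht₁dk
  have ht₂le : t₂ ≤ k + 1 := Nat.le_of_dvd (by omega) ht₂dk
  have ht₁lt : t₁ < m := by omega
  have ht₂lt : t₂ < m := by omega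
  have hm4 : 4 ≤ m := by omega
  have hdd : lucas m ∣ Nat.gcd (lucas m) (fib (2 * k)) * Nat.gcd (lucas m) (fib (2 * k + 2)) :=
    dvd_gcd_mul_gcd hdvd
  have e22 : 2 * (k + 1) = 2 * k + 2 := by ring
  have hcop : Nat.Coprime t₁ t₂ := by
    have h1 : Nat.gcd t₁ t₂ ∣ k := (Nat.gcd_dvd_left t₁ t₂).trans ht₁dk
    have h2 : Nat.gcd t₁ t₂ ∣ k + 1 := (Nat.gcd_dvd_right t₁ t₂).trans ht₂dk
    have h3 : Nat.gcd t₁ t₂ ∣ 1 := by simpa using Nat.dvd_sub h2 h1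
    exact Nat.dvd_one.mp h3
  by_cases he₁ : 2 * t₁ ∣ m
  · have b1 : Nat.gcd (lucas m) (fib (2 * k)) ∣ 2 := key_gcd_even he₁
    by_cases he₂ : 2 * t₂ ∣ m
    · have b2 : Nat.gcd (lucas m) (fib (2 * k + 2)) ∣ 2 := by
        have := key_gcd_even (m := m) (u := k + 1) he₂
        rwa [e22] at this
      have h4 : lucas m ∣ 4 := by
        have := hdd.trans (mul_dvd_mul b1 b2)
        simpa using this
      exact contra_four h4 hm4
    · have b2 : Nat.gcd (lucas m) (fib (2 * k + 2)) ∣ 2 * lucas t₂ := by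
        have := key_gcd_odd (m := m) (u := k + 1) (by omega)
        rwa [e22, ← ht₂] at this
      have h3t₂ : 3 * t₂ ≤ m := three_mul_le ht₂dm he₂ ht₂lt
      have hL : lucas m ∣ 4 * lucas t₂ := by
        have := hdd.trans (mul_dvd_mul b1 b2)
        rwa [show 2 * (2 * lucas t₂) = 4 * lucas t₂ by ring] at this
      rcases Nat.lt_or_ge t₂ 2 with h | h
      · have ht21 : t₂ = 1 := by omega
        rw [ht21] at hL
        exact contra_four (by simpa [show lucas 1 = 1 from rfl] using hL) hm4
      · exact contra_fourlucas h h3t₂ hL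
  · have b1 : Nat.gcd (lucas m) (fib (2 * k)) ∣ 2 * lucas t₁ := by
      have := key_gcd_odd (m := m) (u := k) (by omega)
      rwa [← ht₁] at this
    have h3t₁ : 3 * t₁ ≤ m := three_mul_le ht₁dm he₁ ht₁lt
    by_cases he₂ : 2 * t₂ ∣ m
    · have b2 : Nat.gcd (lucas m) (fib (2 * k + 2)) ∣ 2 := by
        have := key_gcd_even (m := m) (u := k + 1) he₂
        rwa [e22] at this
      have hL : lucas m ∣ 4 * lucas t₁ := by
        have := hdd.trans (mul_dvd_mul b1 b2)
        rwa [show 2 * lucas t₁ * 2 = 4 * lucas t₁ by ring] at this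
      rcases Nat.lt_or_ge t₁ 2 with h | h
      · have ht11 : t₁ = 1 := by omega
        rw [ht11] at hL
        exact contra_four (by simpa [show lucas 1 = 1 from rfl] using hL) hm4
      · exact contra_fourlucas h h3t₁ hL
    · -- both odd quotients
      have b2 : Nat.gcd (lucas m) (fib (2 * k + 2)) ∣ 2 * lucas t₂ := by
        have := key_gcd_odd (m := m) (u := k + 1) (by omega)
        rwa [e22, ← ht₂] at this
      have h3t₂ : 3 * t₂ ≤ m := three_mul_le ht₂dm he₂ ht₂lt
      have hL : lucas m ∣ 4 * (lucas t₁ * lucas t₂) := by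
        have := hdd.trans (mul_dvd_mul b1 b2)
        rwa [show 2 * lucas t₁ * (2 * lucas t₂) = 4 * (lucas t₁ * lucas t₂) by ring] at this
      -- oddness of t₁ and t₂
      obtain ⟨q₁, hq₁⟩ := ht₁dm
      obtain ⟨q₂, hq₂⟩ := ht₂dm
      have hq₁odd : ¬ 2 ∣ q₁ := by
        intro ⟨r, hr⟩
        exact he₁ ⟨r, by rw [hq₁, hr]; ring⟩
      have hq₂odd : ¬ 2 ∣ q₂ := by
        intro ⟨r, hr⟩
        exact he₂ ⟨r, by rw [hq₂, hr]; ring⟩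
      have ht₂dq₁ : t₂ ∣ q₁ := by
        apply hcop.symm.dvd_of_dvd_mul_left
        have h' : t₂ ∣ t₁ * q₁ := by
          rw [← hq₁]; exact Nat.gcd_dvd_left m (k + 1)
        exact h'
      have ht₁dq₂ : t₁ ∣ q₂ := by
        apply hcop.dvd_of_dvd_mul_left
        have h' : t₁ ∣ t₂ * q₂ := by
          rw [← hq₂]; exact Nat.gcd_dvd_left m k
        exact h'
      have ht₁odd : ¬ 2 ∣ t₁ := fun h => hq₂odd (h.trans ht₁dq₂)
      have ht₂odd : ¬ 2 ∣ t₂ := fun h => hq₁odd (h.trans ht₂dq₁)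
      rcases Nat.lt_or_ge t₁ 2 with h1 | h1
      · have ht11 : t₁ = 1 := by omega
        rw [ht11] at hL
        simp only [show lucas 1 = 1 from rfl, one_mul] at hL
        rcases Nat.lt_or_ge t₂ 2 with h2 | h2
        · have ht21 : t₂ = 1 := by omega
          rw [ht21] at hL
          exact contra_four (by simpa [show lucas 1 = 1 from rfl] using hL) hm4
        · exact contra_fourlucas h2 h3t₂ hL
      · rcases Nat.lt_or_ge t₂ 2 with h2 | h2
        · have ht21 : t₂ = 1 := by omega
          rw [ht21] at hL
          simp only [show lucas 1 = 1 from rfl, mul_one] at hL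
          exact contra_fourlucas h1 h3t₁ hL
        · -- both ≥ 2, odd, coprime hence distinct
          have h1' : 3 ≤ t₁ := by omega
          have h2' : 3 ≤ t₂ := by omega
          have hne : t₁ ≠ t₂ := by
            intro h
            rw [h] at hcop
            simp [Nat.Coprime, Nat.gcd_self] at hcop
            omega
          have hmul : t₁ * t₂ ∣ m :=
            hcop.mul_dvd_of_dvd_of_dvd (Nat.gcd_dvd_left m k) (Nat.gcd_dvd_left m (k + 1))
          have hmge : t₁ * t₂ ≤ m := Nat.le_of_dvd (by omega) hmul
          have hmm : t₁ + t₂ + 7 ≤ m := by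
            rcases Nat.lt_or_ge t₁ t₂ with hlt | hge
            · have h5 : 5 ≤ t₂ := by omega
              have ha : 3 * t₂ ≤ t₁ * t₂ := Nat.mul_le_mul_right t₂ h1'
              have hb : t₁ * 5 ≤ t₁ * t₂ := Nat.mul_le_mul_left t₁ h5
              linarith
            · have h5 : 5 ≤ t₁ := by omega
              have ha : 5 * t₂ ≤ t₁ * t₂ := Nat.mul_le_mul_right t₂ h5
              have hb : t₁ * 3 ≤ t₁ * t₂ := Nat.mul_le_mul_left t₁ h2'
              linarith
          exact contra_D h1' h2' hmm hL

theorem lucas_partial_sum_4k (k : ℕ) (hk : 1 ≤ k) :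
    (∑ i ∈ Finset.Icc 1 (4 * k), lucas i) = lucas (4 * k + 2) - 3 ∧
    lucas (4 * k + 2) - 3 = 5 * Nat.fib (k + 1) * Nat.fib (2 * k) * lucas (k + 1) ∧
    lucas (k + 1) ∣ lucas (4 * k + 2) - 3 ∧
    (∀ m : ℕ, k + 1 < m → ¬ lucas m ∣ lucas (4 * k + 2) - 3) := by
  have hid := lucas_4k2 k
  have hN : lucas (4 * k + 2) - 3 = 5 * fib (2 * k) * fib (2 * k + 2) := by omega
  have h5 : fib (k + 1) * lucas (k + 1) = fib (2 * k + 2) := by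
    have := fib_mul_lucas (k + 1)
    rwa [show 2 * (k + 1) = 2 * k + 2 by ring] at this
  have hp2 : lucas (4 * k + 2) - 3 = 5 * fib (k + 1) * fib (2 * k) * lucas (k + 1) := by
    rw [hN, ← h5]; ring
  refine ⟨?_, hp2, ?_, ?_⟩
  · have := sum_lucas (4 * k); omega
  · rw [hp2]; exact dvd_mul_left _ _
  · intro m hmgt hdvd
    have hmcop : Nat.Coprime (lucas m) 5 :=
      ((Nat.Prime.coprime_iff_not_dvd (by norm_num)).mpr (five_not_dvd_lucas m)).symm
    rcases Nat.lt_or_ge k 2 with hk1 | hk2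
    · have hkk : k = 1 := by omega
      subst hkk
      have h15 : lucas (4 * 1 + 2) - 3 = 15 := by decide
      rw [h15] at hdvd
      have h3 : lucas m ∣ 3 := hmcop.dvd_of_dvd_mul_right (by simpa using hdvd)
      have hle := Nat.le_of_dvd (by norm_num) h3
      have hge : lucas 3 ≤ lucas m := lucas_mono (by norm_num) (by omega)
      have : lucas 3 = 4 := rfl
      omega
    · rw [hN] at hdvd
      have hdvd' : lucas m ∣ fib (2 * k) * fib (2 * k + 2) := by
        have h' : lucas m ∣ fib (2 * k) * fib (2 * k + 2) * 5 := by
          rw [show fib (2 * k) * fib (2 * k + 2) * 5 = 5 * fib (2 * k) * fib (2 * k + 2) from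
            by ring]
          exact hdvd
        exact hmcop.dvd_of_dvd_mul_right h'
      exact main4 k hk2 m hmgt hdvd'
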